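/- For a TU cost game (N,c) with empty core, the cost of stability equals the extended-core subsidy value: δ_CoS := c(N) - max{ x(N) : x(S) ≤ c(S) for all S ⊆ N } equals δ_ec := min{ t(N) : there exist x ∈ ℝ^N, t ∈ ℝ^N_≥0 with x(N) = c(N) and (x - t)(S) ≤ c(S) for all proper S ⊊ N }. -/
import Mathlib


open Finset

/-- For a TU cost game with empty core, the cost of stability
`δ_CoS = c(N) - max{x(N) : x(S) ≤ c(S) ∀ S ⊆ N}` equals the extended-core subsidy value
`δ_ec = min{t(N) : ∃ x, t ≥ 0, x(N) = c(N), (x-t)(S) ≤ c(S) ∀ S ⊊ N}`. -/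
theorem cost_of_stability_eq_extended_core {n : ℕ} (c : Finset (Fin n) → ℝ)
    (hc : ∀ S, 0 ≤ c S)
    (hempty : ¬ ∃ x : Fin n → ℝ,
      (∀ S : Finset (Fin n), S ⊂ univ → ∑ i ∈ S, x i ≤ c S) ∧
      ∑ i, x i = c univ)
    (m d : ℝ)
    (hm : IsGreatest {v : ℝ | ∃ x : Fin n → ℝ,
      (∀ S : Finset (Fin n), ∑ i ∈ S, x i ≤ c S) ∧ v = ∑ i, x i} m)
    (hd : IsLeast {v : ℝ | ∃ x t : Fin n → ℝ,
      (∀ i, 0 ≤ t i) ∧ (∑ i, x i = c univ) ∧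
      (∀ S : Finset (Fin n), S ⊂ univ → ∑ i ∈ S, (x i - t i) ≤ c S) ∧
      v = ∑ i, t i} d) :
    c univ - m = d := by
  obtain ⟨⟨x, hx, hxm⟩, hub⟩ := hm
  obtain ⟨⟨y, t, ht, hy, hyt, hdt⟩, hlb⟩ := hd
  -- Direction 2: c univ - m ≤ d
  have hzfeas : ∀ S : Finset (Fin n), ∑ i ∈ S, (y i - t i) ≤ c S := by
    intro S
    by_cases hS : S = univ
    · subst hS
      have htsum : (0:ℝ) ≤ ∑ i, t i := Finset.sum_nonneg fun i _ => ht i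
      calc ∑ i, (y i - t i) = (∑ i, y i) - ∑ i, t i := by rw [Finset.sum_sub_distrib]
        _ ≤ c univ := by rw [hy]; linarith
    · exact hyt S (lt_of_le_of_ne (Finset.subset_univ S) hS)
  have hmem : (∑ i, (y i - t i)) ∈ {v : ℝ | ∃ x : Fin n → ℝ,
      (∀ S : Finset (Fin n), ∑ i ∈ S, x i ≤ c S) ∧ v = ∑ i, x i} :=
    ⟨fun i => y i - t i, hzfeas, rfl⟩
  have h2 : c univ - m ≤ d := by
    have := hub hmem
    rw [Finset.sum_sub_distrib, hy] at this
    linarith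
  -- Direction 1: d ≤ c univ - m
  have h1 : d ≤ c univ - m := by
    rcases Nat.eq_zero_or_pos n with hn | hn
    · subst hn
      have h1 : (∑ i, y i) = 0 := by simp
      have h2 : (∑ i, t i) = 0 := by simp
      have h3 : (∑ i, x i) = 0 := by simp
      rw [h1] at hy; rw [h2] at hdt; rw [h3] at hxm
      linarith
    · have hnne : (n:ℝ) ≠ 0 := by positivity
      have hmle : m ≤ c univ := by rw [hxm]; exact hx univ
      have hsum : ∑ _i : Fin n, (c univ - m) / n = c univ - m := by
        rw [Finset.sum_const, Finset.card_univ, Fintype.card_fin, nsmul_eq_mul]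
        field_simp
      have hmem2 : (c univ - m) ∈ {v : ℝ | ∃ x t : Fin n → ℝ,
          (∀ i, 0 ≤ t i) ∧ (∑ i, x i = c univ) ∧
          (∀ S : Finset (Fin n), S ⊂ univ → ∑ i ∈ S, (x i - t i) ≤ c S) ∧
          v = ∑ i, t i} := by
        refine ⟨fun i => x i + (c univ - m)/n, fun _ => (c univ - m)/n,
          fun i => div_nonneg (by linarith) (by positivity), ?_, ?_, hsum.symm⟩
        · rw [Finset.sum_add_distrib, hsum, ← hxm]; ring
        · intro S _
          simpa using hx S
      exact hlb hmem2
  linarith
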